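/- arXiv:2402.13461 — 6 statements merged into one kernel-verified Lean document; each statement's English description precedes it below -/
import Mathlib

section
/- Let g, f : ℝⁿ → ℝ be convex functions and suppose Φ = g − f attains a (global) minimum at x̃. Then ∂g(x̃) ∩ ∂f(x̃) ≠ ∅, where ∂ denotes the convex subdifferential. -/
open RealInnerProductSpace

lemma exists_subgradient {n : ℕ} (f : EuclideanSpace ℝ (Fin n) → ℝ)
    (hf : ConvexOn ℝ Set.univ f) (xt : EuclideanSpace ℝ (Fin n)) :
    ∃ u : EuclideanSpace ℝ (Fin n), ∀ v, ⟪u, v - xt⟫ + f xt ≤ f v := by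
  have hcont : Continuous f := hf.locallyLipschitz.continuous
  set s : Set (EuclideanSpace ℝ (Fin n) × ℝ) := {p | f p.1 < p.2} with hs
  have hopen : IsOpen s := isOpen_lt (by fun_prop) continuous_snd
  have hconv : Convex ℝ s := by
    rintro ⟨p1, p2⟩ hp ⟨q1, q2⟩ hq a b ha hb hab
    simp only [hs, Set.mem_setOf_eq] at hp hq ⊢
    have h1 : f (a • p1 + b • q1) ≤ a • f p1 + b • f q1 :=
      hf.2 (Set.mem_univ _) (Set.mem_univ _) ha hb hab
    simp only [smul_eq_mul] at h1 ⊢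
    have : a * f p1 + b * f q1 < a * p2 + b * q2 := by
      rcases lt_or_eq_of_le ha with ha' | ha'
      · have : a * f p1 < a * p2 := by nlinarith
        nlinarith [mul_le_mul_of_nonneg_left hq.le hb]
      · have hb1 : b = 1 := by linarith
        simp only [← ha', hb1, zero_mul, one_mul, zero_add]
        exact hq
    exact lt_of_le_of_lt h1 this
  have hnot : (xt, f xt) ∉ s := by simp [hs]
  obtain ⟨L, hL⟩ := geometric_hahn_banach_point_open hconv hopen hnot
  set φ : EuclideanSpace ℝ (Fin n) → ℝ := fun x => L (x, 0) with hφ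
  set c : ℝ := L (0, 1) with hc
  have hLxt : ∀ x t, L (x, t) = φ x + t * c := by
    intro x t
    have : (x, t) = (x, (0:ℝ)) + t • ((0:EuclideanSpace ℝ (Fin n)), (1:ℝ)) := by
      simp [Prod.ext_iff]
    rw [this, map_add, map_smul]
    simp [hφ, hc, smul_eq_mul]
  have hsep : ∀ x t, f x < t → φ xt + f xt * c < φ x + t * c := by
    intro x t ht
    have := hL (x, t) ht
    rwa [hLxt, hLxt] at this
  have hcpos : 0 < c := by
    have := hsep xt (f xt + 1) (by linarith)
    nlinarith
  have key : ∀ x, φ xt + f xt * c ≤ φ x + f x * c := by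
    intro x
    by_contra h
    push_neg at h
    set ε := (φ xt + f xt * c - (φ x + f x * c)) / (2 * c) with hε
    have hεpos : 0 < ε := by apply div_pos <;> linarith
    have := hsep x (f x + ε) (by linarith)
    have h2 : ε * c = (φ xt + f xt * c - (φ x + f x * c)) / 2 := by
      rw [hε, div_mul_eq_mul_div, mul_div_mul_right _ _ hcpos.ne']
    nlinarith
  set T : EuclideanSpace ℝ (Fin n) →L[ℝ] ℝ :=
    c⁻¹ • (-(L.comp (ContinuousLinearMap.inl ℝ (EuclideanSpace ℝ (Fin n)) ℝ))) with hT
  have hTval : ∀ x, T x = -(φ x) / c := by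
    intro x
    simp [hT, hφ, div_eq_inv_mul, mul_comm]
  refine ⟨(InnerProductSpace.toDual ℝ (EuclideanSpace ℝ (Fin n))).symm T, fun v => ?_⟩
  have hinner : ⟪(InnerProductSpace.toDual ℝ (EuclideanSpace ℝ (Fin n))).symm T, v - xt⟫
      = T (v - xt) := by
    rw [← InnerProductSpace.toDual_apply_apply]
    simp
  rw [hinner, map_sub, hTval, hTval]
  have := key v
  have h3 : (-(φ v) / c - -(φ xt) / c) * c = φ xt - φ v := by field_simp; ring
  nlinarith

theorem stmt_2 {n : ℕ} (g f : EuclideanSpace ℝ (Fin n) → ℝ)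
    (hg : ConvexOn ℝ Set.univ g) (hf : ConvexOn ℝ Set.univ f)
    (xt : EuclideanSpace ℝ (Fin n))
    (hmin : ∀ x, g xt - f xt ≤ g x - f x) :
    ∃ u : EuclideanSpace ℝ (Fin n),
      (∀ v, ⟪u, v - xt⟫ + g xt ≤ g v) ∧ (∀ v, ⟪u, v - xt⟫ + f xt ≤ f v) := by
  obtain ⟨u, hu⟩ := exists_subgradient f hf xt
  exact ⟨u, fun v => by have := hmin v; have := hu v; linarith, hu⟩
end

section
/- Let g : ℝⁿ → ℝ be proper lsc convex, λ > 0, and D symmetric positive definite with eigenvalues in [1/m, m], m ≥ 1. Then the proximal mapping prox^D_{λg} is Lipschitz continuous with constant m²: ‖prox^D_{λg}(x) − prox^D_{λg}(y)‖ ≤ m²‖x − y‖ for all x, y ∈ ℝⁿ. -/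
open Matrix

lemma aux_symm {n : ℕ} {D : Matrix (Fin n) (Fin n) ℝ} (hD : D.IsHermitian)
    (a b : Fin n → ℝ) : a ⬝ᵥ D *ᵥ b = b ⬝ᵥ D *ᵥ a := by
  have hT : Dᵀ = D := by
    rw [← Matrix.conjTranspose_eq_transpose_of_trivial]; exact hD
  rw [Matrix.dotProduct_mulVec, ← Matrix.vecMul_transpose, hT, dotProduct_comm]

lemma aux_bounds {n : ℕ} {D : Matrix (Fin n) (Fin n) ℝ} (hD : D.IsHermitian) {a b : ℝ}
    (h : ∀ i, hD.eigenvalues i ∈ Set.Icc a b) (z : Fin n → ℝ) :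
    a * (z ⬝ᵥ z) ≤ z ⬝ᵥ D *ᵥ z ∧ z ⬝ᵥ D *ᵥ z ≤ b * (z ⬝ᵥ z) := by
  classical
  set U : Matrix (Fin n) (Fin n) ℝ := (hD.eigenvectorUnitary : Matrix (Fin n) (Fin n) ℝ) with hU
  set c : Fin n → ℝ := star U *ᵥ z with hc
  have hTU : Uᵀ = star U := by
    rw [Matrix.star_eq_conjTranspose, Matrix.conjTranspose_eq_transpose_of_trivial]
  have hUU : U * star U = 1 := (Matrix.mem_unitaryGroup_iff).mp hD.eigenvectorUnitary.2
  have key : z ⬝ᵥ D *ᵥ z = ∑ i, hD.eigenvalues i * (c i)^2 := by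
    conv_lhs => rw [hD.spectral_theorem, Unitary.conjStarAlgAut_apply, ← hU]
    rw [← Matrix.mulVec_mulVec, ← Matrix.mulVec_mulVec, Matrix.dotProduct_mulVec,
      ← Matrix.mulVec_transpose, hTU]
    simp [dotProduct, Matrix.mulVec_diagonal]
    exact Finset.sum_congr rfl fun i _ => by ring
  have key2 : z ⬝ᵥ z = ∑ i, (c i)^2 := by
    have h2 : c ⬝ᵥ c = z ⬝ᵥ z := by
      conv_lhs => rw [hc]
      rw [Matrix.dotProduct_mulVec, ← hTU, Matrix.vecMul_transpose, hTU,
        Matrix.mulVec_mulVec, hUU, Matrix.one_mulVec]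
    rw [← h2]
    simp [dotProduct]
    exact Finset.sum_congr rfl fun i _ => by ring
  constructor
  · rw [key, key2, Finset.mul_sum]
    exact Finset.sum_le_sum fun i _ => mul_le_mul_of_nonneg_right (h i).1 (sq_nonneg _)
  · rw [key, key2, Finset.mul_sum]
    exact Finset.sum_le_sum fun i _ => mul_le_mul_of_nonneg_right (h i).2 (sq_nonneg _)

lemma quad_add {n : ℕ} {D : Matrix (Fin n) (Fin n) ℝ} (hD : D.IsHermitian) (a b : Fin n → ℝ) :
    (a + b) ⬝ᵥ D *ᵥ (a + b) = a ⬝ᵥ D *ᵥ a + 2*(a ⬝ᵥ D *ᵥ b) + b ⬝ᵥ D *ᵥ b := by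
  simp only [Matrix.mulVec_add, dotProduct_add, add_dotProduct]
  linarith [aux_symm hD b a]

lemma quad_sub {n : ℕ} {D : Matrix (Fin n) (Fin n) ℝ} (hD : D.IsHermitian) (a b : Fin n → ℝ) :
    (a - b) ⬝ᵥ D *ᵥ (a - b) = a ⬝ᵥ D *ᵥ a - 2*(a ⬝ᵥ D *ᵥ b) + b ⬝ᵥ D *ᵥ b := by
  simp only [Matrix.mulVec_sub, dotProduct_sub, sub_dotProduct]
  linarith [aux_symm hD b a]

lemma quad_comb {n : ℕ} {D : Matrix (Fin n) (Fin n) ℝ} (hD : D.IsHermitian)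
    (a b : Fin n → ℝ) (t : ℝ) :
    ((1-t) • a + t • b) ⬝ᵥ D *ᵥ ((1-t) • a + t • b)
      = (1-t)^2 * (a ⬝ᵥ D *ᵥ a) + 2*(1-t)*t*(a ⬝ᵥ D *ᵥ b) + t^2 * (b ⬝ᵥ D *ᵥ b) := by
  simp only [Matrix.mulVec_add, Matrix.mulVec_smul, dotProduct_add, add_dotProduct,
    dotProduct_smul, smul_dotProduct, smul_eq_mul]
  rw [aux_symm hD b a]; ring

lemma quad_flip {n : ℕ} (D : Matrix (Fin n) (Fin n) ℝ) (a b : Fin n → ℝ) :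
    (a - b) ⬝ᵥ D *ᵥ (a - b) = (b - a) ⬝ᵥ D *ᵥ (b - a) := by
  simp only [Matrix.mulVec_sub, dotProduct_sub, sub_dotProduct]
  ring

lemma lin4 {n : ℕ} (D : Matrix (Fin n) (Fin n) ℝ) (a b c d : Fin n → ℝ) :
    (a - c) ⬝ᵥ D *ᵥ (c - d) - (b - d) ⬝ᵥ D *ᵥ (c - d)
      = (a - b) ⬝ᵥ D *ᵥ (c - d) - (c - d) ⬝ᵥ D *ᵥ (c - d) := by
  simp only [sub_dotProduct]
  ring

lemma dot_self_nonneg {n : ℕ} (z : Fin n → ℝ) : 0 ≤ z ⬝ᵥ z :=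
  Finset.sum_nonneg fun i _ => mul_self_nonneg (z i)

theorem stmt_5 {n : ℕ} (m lam : ℝ) (hm : 1 ≤ m) (hlam : 0 < lam)
    (D : Matrix (Fin n) (Fin n) ℝ) (hD : D.PosDef)
    (heig : ∀ i, hD.1.eigenvalues i ∈ Set.Icc (1/m) m)
    (g : EuclideanSpace ℝ (Fin n) → ℝ) (hg : ConvexOn ℝ Set.univ g)
    (hlsc : LowerSemicontinuous g)
    (p : EuclideanSpace ℝ (Fin n) → EuclideanSpace ℝ (Fin n))
    (hp : ∀ x w, g (p x) + ((p x - x) ⬝ᵥ D.mulVec (p x - x)) / (2*lam)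
            ≤ g w + ((w - x) ⬝ᵥ D.mulVec (w - x)) / (2*lam)) :
    ∀ x y, ‖p x - p y‖ ≤ m^2 * ‖x - y‖ := by
  have hm0 : (0:ℝ) < m := lt_of_lt_of_le one_pos hm
  have hlam2 : (0:ℝ) < 2 * lam := by linarith
  have hnorm : ∀ z : EuclideanSpace ℝ (Fin n), z ⬝ᵥ z = ‖z‖^2 := by
    intro z
    rw [← real_inner_self_eq_norm_sq]
    simp [PiLp.inner_apply, dotProduct]
    rw [EuclideanSpace.norm_eq, Real.sq_sqrt (by positivity)]
    simp [Real.norm_eq_abs, sq_abs, sq]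
  have hQnn : ∀ z : EuclideanSpace ℝ (Fin n), (0:ℝ) ≤ z ⬝ᵥ D *ᵥ z := by
    intro z
    have h1 := (aux_bounds hD.1 heig z).1
    have h2 : (0:ℝ) ≤ 1/m * (z ⬝ᵥ z) :=
      mul_nonneg (by positivity) (dot_self_nonneg z)
    linarith
  have hp' : ∀ x w : EuclideanSpace ℝ (Fin n),
      2*lam * g (p x) + (p x - x) ⬝ᵥ D *ᵥ (p x - x)
        ≤ 2*lam * g w + (w - x) ⬝ᵥ D *ᵥ (w - x) := by
    intro x w
    have h2 := mul_le_mul_of_nonneg_left (hp x w) (le_of_lt hlam2)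
    rw [mul_add, mul_add, mul_div_cancel₀ _ (ne_of_gt hlam2),
      mul_div_cancel₀ _ (ne_of_gt hlam2)] at h2
    exact h2
  -- step A: strong optimality up to factor (1-t)
  have stepA : ∀ (x w : EuclideanSpace ℝ (Fin n)) (t : ℝ), 0 < t → t ≤ 1 →
      2*lam * g (p x) + (p x - x) ⬝ᵥ D *ᵥ (p x - x)
          + (1 - t) * ((w - p x) ⬝ᵥ D *ᵥ (w - p x))
        ≤ 2*lam * g w + (w - x) ⬝ᵥ D *ᵥ (w - x) := by
    intro x w t ht ht1
    set wt : EuclideanSpace ℝ (Fin n) := p x + t • (w - p x) with hwt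
    have hcomb : wt = (1 - t) • p x + t • w := by rw [hwt]; module
    have hconv : g wt ≤ (1 - t) * g (p x) + t * g w := by
      rw [hcomb]
      exact hg.2 (Set.mem_univ _) (Set.mem_univ _) (by linarith) (le_of_lt ht) (by ring)
    have hconv' := mul_le_mul_of_nonneg_left hconv (le_of_lt hlam2)
    have hvec : wt - x = (1 - t) • (p x - x) + t • (w - x) := by rw [hwt]; module
    have hq1 : (wt - x) ⬝ᵥ D *ᵥ (wt - x)
        = (1-t)^2 * ((p x - x) ⬝ᵥ D *ᵥ (p x - x))
          + 2*(1-t)*t*((p x - x) ⬝ᵥ D *ᵥ (w - x))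
          + t^2 * ((w - x) ⬝ᵥ D *ᵥ (w - x)) := by
      simp only [← WithLp.ofLp_sub]; rw [hvec]; simp only [WithLp.ofLp_add, WithLp.ofLp_smul, WithLp.ofLp_sub]; exact quad_comb hD.1 _ _ t
    have hvec2 : w - p x = (w - x) - (p x - x) := by module
    have hq2 : (w - p x) ⬝ᵥ D *ᵥ (w - p x)
        = ((w - x) ⬝ᵥ D *ᵥ (w - x)) - 2*((w - x) ⬝ᵥ D *ᵥ (p x - x))
          + ((p x - x) ⬝ᵥ D *ᵥ (p x - x)) := by
      simp only [← WithLp.ofLp_sub]; rw [hvec2]; simp only [WithLp.ofLp_sub]; exact quad_sub hD.1 _ _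
    have hsy : (w - x) ⬝ᵥ D *ᵥ (p x - x) = (p x - x) ⬝ᵥ D *ᵥ (w - x) := aux_symm hD.1 _ _
    have h1 := hp' x wt
    rw [hq1] at h1
    have hmul : t * (2*lam * g (p x) + (p x - x) ⬝ᵥ D *ᵥ (p x - x)
          + (1 - t) * ((w - p x) ⬝ᵥ D *ᵥ (w - p x)))
        ≤ t * (2*lam * g w + (w - x) ⬝ᵥ D *ᵥ (w - x)) := by
      rw [hq2, hsy]
      nlinarith [h1, hconv']
    exact le_of_mul_le_mul_left hmul ht
  intro x y
  have keyQ : ∀ t : ℝ, 0 < t → t ≤ 1 →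
      (1 - t) * ((p x - p y) ⬝ᵥ D *ᵥ (p x - p y)) ≤ (p x - p y) ⬝ᵥ D *ᵥ (x - y) := by
    intro t ht ht1
    have hI1 := stepA x (p y) t ht ht1
    have hI2 := stepA y (p x) t ht ht1
    have e1 : p y - x = (p y - y) - (x - y) := by module
    have e2 : p x - y = (p x - x) + (x - y) := by module
    rw [e1] at hI1
    rw [e2] at hI2
    have q3 : (p y - p x) ⬝ᵥ D *ᵥ (p y - p x) = (p x - p y) ⬝ᵥ D *ᵥ (p x - p y) :=
      quad_flip D _ _
    rw [q3] at hI1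
    have q1 : ((p y - y) - (x - y)) ⬝ᵥ D *ᵥ ((p y - y) - (x - y))
        = ((p y - y) ⬝ᵥ D *ᵥ (p y - y)) - 2*((p y - y) ⬝ᵥ D *ᵥ (x - y))
          + ((x - y) ⬝ᵥ D *ᵥ (x - y)) := quad_sub hD.1 _ _
    have q2 : ((p x - x) + (x - y)) ⬝ᵥ D *ᵥ ((p x - x) + (x - y))
        = ((p x - x) ⬝ᵥ D *ᵥ (p x - x)) + 2*((p x - x) ⬝ᵥ D *ᵥ (x - y))
          + ((x - y) ⬝ᵥ D *ᵥ (x - y)) := quad_add hD.1 _ _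
    have q4 : (p x - x) ⬝ᵥ D *ᵥ (x - y) - (p y - y) ⬝ᵥ D *ᵥ (x - y)
        = (p x - p y) ⬝ᵥ D *ᵥ (x - y) - (x - y) ⬝ᵥ D *ᵥ (x - y) := lin4 D _ _ _ _
    simp only [WithLp.ofLp_sub, WithLp.ofLp_add, sub_sub_sub_cancel_right, sub_add_sub_cancel] at hI1 hI2 q1 q2 q4 ⊢
    rw [q1] at hI1
    rw [q2] at hI2
    linarith [hI1, hI2, q4]
  set Qu : ℝ := (p x - p y) ⬝ᵥ D *ᵥ (p x - p y) with hQu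
  set Buv : ℝ := (p x - p y) ⬝ᵥ D *ᵥ (x - y) with hBuv
  set Qv : ℝ := (x - y) ⬝ᵥ D *ᵥ (x - y) with hQv
  have hBnn : 0 ≤ Buv := by have := keyQ 1 one_pos le_rfl; linarith
  have hQunn : 0 ≤ Qu := hQnn _
  have hmain : Qu ≤ Buv := by
    by_contra hcon
    push_neg at hcon
    set t : ℝ := (Qu - Buv) / (Qu + 1) with htdef
    have ht : 0 < t := div_pos (by linarith) (by linarith)
    have ht1 : t ≤ 1 := by
      rw [htdef, div_le_one (by linarith)]; linarith
    have hk := keyQ t ht ht1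
    have hts : t * (Qu + 1) = Qu - Buv := by
      rw [htdef]; field_simp
    nlinarith [hk, hts, ht]
  have q5 : ((p x - p y) - (x - y)) ⬝ᵥ D *ᵥ ((p x - p y) - (x - y))
      = Qu - 2*Buv + Qv := quad_sub hD.1 _ _
  have hQuv : Qu ≤ Qv := by
    have := hQnn ((p x - p y) - (x - y))
    simp only [WithLp.ofLp_sub] at this q5
    rw [q5] at this
    linarith
  -- norm bounds
  have h4 := (aux_bounds hD.1 heig (p x - p y)).1
  have h6 := (aux_bounds hD.1 heig (x - y)).2
  rw [show ((p x).ofLp - (p y).ofLp) ⬝ᵥ ((p x).ofLp - (p y).ofLp) = ‖p x - p y‖^2 from hnorm (p x - p y)] at h4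
  rw [show (x.ofLp - y.ofLp) ⬝ᵥ (x.ofLp - y.ofLp) = ‖x - y‖^2 from hnorm (x - y)] at h6
  replace h6 : Qv ≤ m * ‖x - y‖^2 := h6
  have h5 : ‖p x - p y‖^2 ≤ m * Qu := by
    calc ‖p x - p y‖^2 = m * (1/m * ‖p x - p y‖^2) := by field_simp
    _ ≤ m * Qu := mul_le_mul_of_nonneg_left h4 (le_of_lt hm0)
  have h7 : ‖p x - p y‖^2 ≤ (m * ‖x - y‖)^2 := by nlinarith [h5, h6, hQuv, hm0]
  have h8 : ‖p x - p y‖ ≤ m * ‖x - y‖ := by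
    have := (pow_le_pow_iff_left₀ (norm_nonneg _) (by positivity : (0:ℝ) ≤ m * ‖x - y‖) (two_ne_zero)).mp h7
    exact this
  linarith [h8, mul_nonneg (mul_nonneg (by linarith : (0:ℝ) ≤ m - 1) (le_of_lt hm0)) (norm_nonneg (x - y))]
end

section
/- Under the setting above, ∇Φ_{λ,μ} is Lipschitz continuous with constant η = (1/λ + 1/μ)(m + m³): ‖∇Φ_{λ,μ}(x) − ∇Φ_{λ,μ}(y)‖ ≤ (1/λ + 1/μ)(m + m³)‖x − y‖ for all x, y. -/
open Matrix

/-- The quadratic form `uᵀ D u` on Euclidean space, i.e. `‖u‖²_D`. -/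
def quadD {n : ℕ} (D : Matrix (Fin n) (Fin n) ℝ) (u : EuclideanSpace ℝ (Fin n)) : ℝ :=
  (WithLp.equiv 2 (Fin n → ℝ) u) ⬝ᵥ D.mulVec (WithLp.equiv 2 (Fin n → ℝ) u)

/-- `D * u` as a vector of Euclidean space. -/
noncomputable def mulVecE {n : ℕ} (D : Matrix (Fin n) (Fin n) ℝ)
    (u : EuclideanSpace ℝ (Fin n)) : EuclideanSpace ℝ (Fin n) :=
  (WithLp.equiv 2 (Fin n → ℝ)).symm (D.mulVec (WithLp.equiv 2 (Fin n → ℝ) u))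

lemma mulVecE_eq_lin {n : ℕ} (D : Matrix (Fin n) (Fin n) ℝ) (u : EuclideanSpace ℝ (Fin n)) :
    mulVecE D u = Matrix.toEuclideanLin D u := (Matrix.toEuclideanLin_apply D u).symm

lemma mulVecE_sub {n : ℕ} (D : Matrix (Fin n) (Fin n) ℝ) (u v : EuclideanSpace ℝ (Fin n)) :
    mulVecE D (u - v) = mulVecE D u - mulVecE D v := by
  simp [mulVecE_eq_lin, _root_.map_sub]

lemma mulVecE_smul {n : ℕ} (D : Matrix (Fin n) (Fin n) ℝ) (t : ℝ) (u : EuclideanSpace ℝ (Fin n)) :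
    mulVecE D (t • u) = t • mulVecE D u := by
  simp [mulVecE_eq_lin, _root_.map_smul]

lemma quadD_eq_inner {n : ℕ} (D : Matrix (Fin n) (Fin n) ℝ) (u : EuclideanSpace ℝ (Fin n)) :
    quadD D u = inner ℝ u (mulVecE D u) := by
  simp [quadD, mulVecE, PiLp.inner_apply, dotProduct, RCLike.inner_apply, mul_comm]

lemma inner_mulVecE_symm {n : ℕ} {D : Matrix (Fin n) (Fin n) ℝ} (hD : D.IsHermitian)
    (u v : EuclideanSpace ℝ (Fin n)) :
    (inner ℝ (mulVecE D u) v : ℝ) = inner ℝ u (mulVecE D v) := by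
  have hsym := (Matrix.isHermitian_iff_isSymmetric.mp hD)
  simpa [mulVecE_eq_lin] using hsym u v

lemma mulVecE_eigen {n : ℕ} {D : Matrix (Fin n) (Fin n) ℝ} (hD : D.IsHermitian) (i : Fin n) :
    mulVecE D (hD.eigenvectorBasis i) = hD.eigenvalues i • hD.eigenvectorBasis i := by
  unfold mulVecE
  ext j
  have := congrFun (hD.mulVec_eigenvectorBasis i) j
  simpa using this

lemma inner_mulVecE_eigen {n : ℕ} {D : Matrix (Fin n) (Fin n) ℝ} (hD : D.IsHermitian)
    (u : EuclideanSpace ℝ (Fin n)) (i : Fin n) :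
    (inner ℝ (hD.eigenvectorBasis i) (mulVecE D u) : ℝ)
      = hD.eigenvalues i * inner ℝ (hD.eigenvectorBasis i) u := by
  rw [← inner_mulVecE_symm hD, mulVecE_eigen hD i, real_inner_smul_left]

lemma parseval_norm {E : Type*} [NormedAddCommGroup E] [InnerProductSpace ℝ E] {ι : Type*}
    [Fintype ι] (b : OrthonormalBasis ι ℝ E) (v : E) :
    ‖v‖ ^ 2 = ∑ i, (inner ℝ (b i) v : ℝ) ^ 2 := by
  rw [← real_inner_self_eq_norm_sq, ← b.sum_inner_mul_inner v v]
  congr 1; ext i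
  rw [real_inner_comm v (b i)]; ring

lemma parseval_inner {E : Type*} [NormedAddCommGroup E] [InnerProductSpace ℝ E] {ι : Type*}
    [Fintype ι] (b : OrthonormalBasis ι ℝ E) (u v : E) :
    (inner ℝ u v : ℝ) = ∑ i, (inner ℝ (b i) u : ℝ) * (inner ℝ (b i) v : ℝ) := by
  rw [← b.sum_inner_mul_inner u v]
  congr 1; ext i
  rw [real_inner_comm u (b i)]

lemma norm_mulVecE_le {n : ℕ} {m : ℝ} {D : Matrix (Fin n) (Fin n) ℝ} (hD : D.IsHermitian)
    (hm : 0 ≤ m) (h0 : ∀ i, 0 ≤ hD.eigenvalues i) (hle : ∀ i, hD.eigenvalues i ≤ m)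
    (u : EuclideanSpace ℝ (Fin n)) : ‖mulVecE D u‖ ≤ m * ‖u‖ := by
  have hsq : ‖mulVecE D u‖ ^ 2 ≤ (m * ‖u‖) ^ 2 := by
    rw [parseval_norm hD.eigenvectorBasis]
    have : ∀ i, (inner ℝ (hD.eigenvectorBasis i) (mulVecE D u) : ℝ) ^ 2
        ≤ m ^ 2 * (inner ℝ (hD.eigenvectorBasis i) u : ℝ) ^ 2 := by
      intro i
      rw [inner_mulVecE_eigen hD, mul_pow]
      have ha := h0 i; have hb := hle i
      have hsq : hD.eigenvalues i ^ 2 ≤ m ^ 2 := by nlinarith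
      exact mul_le_mul_of_nonneg_right hsq (sq_nonneg _)
    calc ∑ i, (inner ℝ (hD.eigenvectorBasis i) (mulVecE D u) : ℝ) ^ 2
        ≤ ∑ i, m ^ 2 * (inner ℝ (hD.eigenvectorBasis i) u : ℝ) ^ 2 :=
          Finset.sum_le_sum fun i _ => this i
      _ = (m * ‖u‖) ^ 2 := by
          rw [← Finset.mul_sum, ← parseval_norm hD.eigenvectorBasis]; ring
  have h1 : 0 ≤ ‖mulVecE D u‖ := norm_nonneg _
  have h2 : 0 ≤ m * ‖u‖ := by positivity
  nlinarith

lemma quadD_lower {n : ℕ} {m : ℝ} {D : Matrix (Fin n) (Fin n) ℝ} (hD : D.IsHermitian)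
    (hm : 0 < m) (hge : ∀ i, 1/m ≤ hD.eigenvalues i) (u : EuclideanSpace ℝ (Fin n)) :
    ‖u‖ ^ 2 / m ≤ inner ℝ u (mulVecE D u) := by
  rw [parseval_inner hD.eigenvectorBasis, parseval_norm hD.eigenvectorBasis]
  rw [Finset.sum_div]
  refine Finset.sum_le_sum fun i _ => ?_
  rw [inner_mulVecE_eigen hD]
  have := hge i
  have h2 : (0:ℝ) ≤ (inner ℝ (hD.eigenvectorBasis i) u : ℝ) ^ 2 := sq_nonneg _
  rw [div_eq_mul_inv, mul_comm]
  calc m⁻¹ * (inner ℝ (hD.eigenvectorBasis i) u : ℝ) ^ 2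
      ≤ hD.eigenvalues i * (inner ℝ (hD.eigenvectorBasis i) u : ℝ) ^ 2 := by
        apply mul_le_mul_of_nonneg_right _ h2
        rwa [← one_div]
    _ = (inner ℝ (hD.eigenvectorBasis i) u : ℝ) * (hD.eigenvalues i * (inner ℝ (hD.eigenvectorBasis i) u : ℝ)) := by ring

lemma quadD_expand {n : ℕ} {D : Matrix (Fin n) (Fin n) ℝ} (hD : D.IsHermitian)
    (a b : EuclideanSpace ℝ (Fin n)) (t : ℝ) :
    quadD D (a + t • b) = quadD D a + 2*t*(inner ℝ a (mulVecE D b) : ℝ) + t^2 * quadD D b := by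
  simp only [quadD_eq_inner]
  have hadd : mulVecE D (a + t • b) = mulVecE D a + t • mulVecE D b := by
    simp [mulVecE_eq_lin, map_add, _root_.map_smul]
  rw [hadd, inner_add_left, inner_add_right, inner_add_right,
      real_inner_smul_left, real_inner_smul_left, real_inner_smul_right, real_inner_smul_right]
  have hsym : (inner ℝ b (mulVecE D a) : ℝ) = inner ℝ a (mulVecE D b) := by
    rw [← inner_mulVecE_symm hD, real_inner_comm]
  rw [hsym]; ring

lemma prox_subgrad {n : ℕ} {lam : ℝ} (hlam : 0 < lam) {D : Matrix (Fin n) (Fin n) ℝ}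
    (hD : D.IsHermitian) (hpos : ∀ u, 0 ≤ quadD D u)
    {g : EuclideanSpace ℝ (Fin n) → ℝ} (hg : ConvexOn ℝ Set.univ g)
    {pg : EuclideanSpace ℝ (Fin n) → EuclideanSpace ℝ (Fin n)}
    (hpg : ∀ x w, g (pg x) + quadD D (pg x - x) / (2*lam) ≤ g w + quadD D (w - x) / (2*lam))
    (x y : EuclideanSpace ℝ (Fin n)) :
    g (pg x) - g (pg y) ≤ (inner ℝ (pg x - x) (mulVecE D (pg y - pg x)) : ℝ) / lam := by
  set p := pg x
  set q := pg y
  set a := p - x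
  set b := q - p
  set C := quadD D b / (2*lam) with hC
  have hC0 : 0 ≤ C := div_nonneg (hpos b) (by linarith)
  have key : ∀ t : ℝ, 0 < t → t ≤ 1 →
      g p - g q ≤ (inner ℝ a (mulVecE D b) : ℝ) / lam + t * C := by
    intro t ht0 ht1
    have hcvx : g (p + t • b) ≤ (1-t) * g p + t * g q := by
      have hpt : p + t • b = (1-t) • p + t • q := by
        simp only [b]; module
      rw [hpt]
      exact hg.2 (Set.mem_univ p) (Set.mem_univ q) (by linarith) (le_of_lt ht0) (by ring)
    have hmin := hpg x (p + t • b)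
    have hquad : quadD D (p + t • b - x) =
        quadD D a + 2*t*(inner ℝ a (mulVecE D b) : ℝ) + t^2 * quadD D b := by
      have : p + t • b - x = a + t • b := by simp only [a]; abel
      rw [this, quadD_expand hD]
    rw [hquad] at hmin
    have hlam' : (0:ℝ) < 2 * lam := by linarith
    -- from hmin : g p + quadD D a/(2 lam) ≤ g (p + t•b) + (...)/(2 lam)
    have h2 : g p ≤ (1-t) * g p + t * g q
        + (2*t*(inner ℝ a (mulVecE D b) : ℝ) + t^2 * quadD D b) / (2*lam) := by
      have := le_trans hmin (by linarith [hcvx] :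
        g (p + t • b) + (quadD D a + 2*t*(inner ℝ a (mulVecE D b) : ℝ) + t^2 * quadD D b) / (2*lam)
          ≤ (1-t) * g p + t * g q
            + (quadD D a + 2*t*(inner ℝ a (mulVecE D b) : ℝ) + t^2 * quadD D b) / (2*lam))
      have hsplit : (quadD D a + 2*t*(inner ℝ a (mulVecE D b) : ℝ) + t^2 * quadD D b) / (2*lam)
          = quadD D a / (2*lam)
            + (2*t*(inner ℝ a (mulVecE D b) : ℝ) + t^2 * quadD D b) / (2*lam) := by
        ring
      rw [hsplit] at this
      linarith
    -- divide by t
    have h3 : t * (g p - g q) ≤ t * ((inner ℝ a (mulVecE D b) : ℝ) / lam + t * C) := by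
      have hrw : (2*t*(inner ℝ a (mulVecE D b) : ℝ) + t^2 * quadD D b) / (2*lam)
          = t * ((inner ℝ a (mulVecE D b) : ℝ) / lam + t * C) := by
        rw [hC]; field_simp
      rw [hrw] at h2
      linarith
    exact le_of_mul_le_mul_left h3 ht0
  refine le_of_forall_pos_le_add fun ε hε => ?_
  have htpos : 0 < min 1 (ε / (C+1)) := lt_min one_pos (div_pos hε (by linarith))
  have := key (min 1 (ε / (C+1))) htpos (min_le_left _ _)
  have htC : min 1 (ε / (C+1)) * C ≤ ε := by
    have h1 : min 1 (ε / (C+1)) ≤ ε / (C+1) := min_le_right _ _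
    have h2 : min 1 (ε / (C+1)) * C ≤ (ε / (C+1)) * C :=
      mul_le_mul_of_nonneg_right h1 hC0
    have h3 : (ε / (C+1)) * C ≤ ε := by
      rw [div_mul_eq_mul_div, div_le_iff₀ (by linarith)]
      nlinarith
    linarith
  linarith

lemma prox_lip {n : ℕ} {m lam : ℝ} (hm : 1 ≤ m) (hlam : 0 < lam)
    {D : Matrix (Fin n) (Fin n) ℝ} (hD : D.PosDef)
    (heig : ∀ i, hD.1.eigenvalues i ∈ Set.Icc (1/m) m)
    {g : EuclideanSpace ℝ (Fin n) → ℝ} (hg : ConvexOn ℝ Set.univ g)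
    {pg : EuclideanSpace ℝ (Fin n) → EuclideanSpace ℝ (Fin n)}
    (hpg : ∀ x w, g (pg x) + quadD D (pg x - x) / (2*lam) ≤ g w + quadD D (w - x) / (2*lam))
    (x y : EuclideanSpace ℝ (Fin n)) :
    ‖pg x - pg y‖ ≤ m^2 * ‖x - y‖ := by
  have hm0 : (0:ℝ) < m := by linarith
  have hge : ∀ i, 1/m ≤ hD.1.eigenvalues i := fun i => (heig i).1
  have hle : ∀ i, hD.1.eigenvalues i ≤ m := fun i => (heig i).2
  have h0 : ∀ i, 0 ≤ hD.1.eigenvalues i := fun i => le_trans (by positivity) (hge i)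
  have hpos : ∀ u, 0 ≤ quadD D u := fun u => by
    rw [quadD_eq_inner]
    exact le_trans (by positivity) (quadD_lower hD.1 hm0 hge u)
  have h1 := prox_subgrad hlam hD.1 hpos hg hpg x y
  have h2 := prox_subgrad hlam hD.1 hpos hg hpg y x
  set p := pg x
  set q := pg y
  set w : EuclideanSpace ℝ (Fin n) := p - q with hw
  set z : EuclideanSpace ℝ (Fin n) := x - y with hz
  have hsum : 0 ≤ (inner ℝ (p - x) (mulVecE D (q - p)) : ℝ) + inner ℝ (q - y) (mulVecE D (p - q)) := by
    have := add_le_add h1 h2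
    have h3 : (0:ℝ) ≤ ((inner ℝ (p - x) (mulVecE D (q - p)) : ℝ)
        + inner ℝ (q - y) (mulVecE D (p - q))) / lam := by
      rw [add_div]; linarith
    by_contra hneg
    push_neg at hneg
    have : (inner ℝ (p - x) (mulVecE D (q - p)) : ℝ) + inner ℝ (q - y) (mulVecE D (p - q)) < 0 := hneg
    have hlt : ((inner ℝ (p - x) (mulVecE D (q - p)) : ℝ)
        + inner ℝ (q - y) (mulVecE D (p - q))) / lam < 0 := div_neg_of_neg_of_pos this hlam
    linarith
  have hkey : (inner ℝ w (mulVecE D w) : ℝ) ≤ inner ℝ z (mulVecE D w) := by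
    have hqp : (q - p : EuclideanSpace ℝ (Fin n)) = -w := by rw [hw]; abel
    have hrw : (inner ℝ (p - x) (mulVecE D (q - p)) : ℝ) = -(inner ℝ (p - x) (mulVecE D w)) := by
      rw [hqp]
      have : mulVecE D (-w) = -(mulVecE D w) := by
        simp [mulVecE_eq_lin, map_neg]
      rw [this, inner_neg_right]
    rw [hrw] at hsum
    have hsplit : (inner ℝ (q - y) (mulVecE D w) : ℝ) - inner ℝ (p - x) (mulVecE D w)
        = inner ℝ z (mulVecE D w) - inner ℝ w (mulVecE D w) := by
      rw [← inner_sub_left, ← inner_sub_left]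
      congr 1
      rw [hz, hw]; abel
    have hpq : (p - q : EuclideanSpace ℝ (Fin n)) = w := hw.symm
    rw [hpq] at hsum
    linarith [hsplit]
  have hlow : ‖w‖^2 / m ≤ (inner ℝ w (mulVecE D w) : ℝ) := quadD_lower hD.1 hm0 hge w
  have hub : (inner ℝ z (mulVecE D w) : ℝ) ≤ ‖z‖ * (m * ‖w‖) := by
    calc (inner ℝ z (mulVecE D w) : ℝ) ≤ ‖z‖ * ‖mulVecE D w‖ := real_inner_le_norm _ _
      _ ≤ ‖z‖ * (m * ‖w‖) := by
          apply mul_le_mul_of_nonneg_left (norm_mulVecE_le hD.1 (le_of_lt hm0) h0 hle w)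
            (norm_nonneg _)
  have hfin : ‖w‖^2 ≤ m^2 * ‖z‖ * ‖w‖ := by
    have := le_trans hlow (le_trans hkey hub)
    rw [div_le_iff₀ hm0] at this
    nlinarith [norm_nonneg w, norm_nonneg z]
  by_cases hw0 : ‖w‖ = 0
  · rw [hw0]; positivity
  · have hwpos : 0 < ‖w‖ := lt_of_le_of_ne (norm_nonneg _) (Ne.symm hw0)
    have : ‖w‖ * ‖w‖ ≤ (m^2 * ‖z‖) * ‖w‖ := by nlinarith
    exact le_of_mul_le_mul_right this hwpos

theorem stmt_9 {n : ℕ} (m lam mu : ℝ) (hm : 1 ≤ m) (hlam : 0 < lam) (hmu : 0 < mu)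
    (D₁ D₂ : Matrix (Fin n) (Fin n) ℝ) (hD₁ : D₁.PosDef) (hD₂ : D₂.PosDef)
    (heig₁ : ∀ i, hD₁.1.eigenvalues i ∈ Set.Icc (1/m) m)
    (heig₂ : ∀ i, hD₂.1.eigenvalues i ∈ Set.Icc (1/m) m)
    (g f : EuclideanSpace ℝ (Fin n) → ℝ)
    (hg : ConvexOn ℝ Set.univ g) (hf : ConvexOn ℝ Set.univ f)
    (hglsc : LowerSemicontinuous g) (hflsc : LowerSemicontinuous f)
    (pg pf : EuclideanSpace ℝ (Fin n) → EuclideanSpace ℝ (Fin n))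
    (hpg : ∀ x w, g (pg x) + quadD D₁ (pg x - x) / (2*lam)
            ≤ g w + quadD D₁ (w - x) / (2*lam))
    (hpf : ∀ x w, f (pf x) + quadD D₂ (pf x - x) / (2*mu)
            ≤ f w + quadD D₂ (w - x) / (2*mu))
    (G : EuclideanSpace ℝ (Fin n) → EuclideanSpace ℝ (Fin n))
    (hG : ∀ x, G x = (1/lam) • mulVecE D₁ (x - pg x) - (1/mu) • mulVecE D₂ (x - pf x)) :
    ∀ x y, ‖G x - G y‖ ≤ (1/lam + 1/mu) * (m + m^3) * ‖x - y‖ := by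
  intro x y
  have hm0 : (0:ℝ) < m := by linarith
  have hlip1 := prox_lip hm hlam hD₁ heig₁ hg hpg x y
  have hlip2 := prox_lip hm hmu hD₂ heig₂ hf hpf x y
  have h01 : ∀ i, 0 ≤ hD₁.1.eigenvalues i := fun i => le_trans (by positivity) (heig₁ i).1
  have h02 : ∀ i, 0 ≤ hD₂.1.eigenvalues i := fun i => le_trans (by positivity) (heig₂ i).1
  have hGdiff : G x - G y = (1/lam) • mulVecE D₁ ((x - pg x) - (y - pg y))
      - (1/mu) • mulVecE D₂ ((x - pf x) - (y - pf y)) := by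
    rw [hG x, hG y,
      mulVecE_sub D₁ (x - pg x) (y - pg y), mulVecE_sub D₂ (x - pf x) (y - pf y),
      smul_sub, smul_sub]
    abel
  have hb1 : ‖(x - pg x) - (y - pg y)‖ ≤ (1 + m^2) * ‖x - y‖ := by
    have : (x - pg x) - (y - pg y) = (x - y) - (pg x - pg y) := by abel
    rw [this]
    calc ‖(x - y) - (pg x - pg y)‖ ≤ ‖x - y‖ + ‖pg x - pg y‖ := norm_sub_le _ _
      _ ≤ ‖x - y‖ + m^2 * ‖x - y‖ := by linarith
      _ = (1 + m^2) * ‖x - y‖ := by ring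
  have hb2 : ‖(x - pf x) - (y - pf y)‖ ≤ (1 + m^2) * ‖x - y‖ := by
    have : (x - pf x) - (y - pf y) = (x - y) - (pf x - pf y) := by abel
    rw [this]
    calc ‖(x - y) - (pf x - pf y)‖ ≤ ‖x - y‖ + ‖pf x - pf y‖ := norm_sub_le _ _
      _ ≤ ‖x - y‖ + m^2 * ‖x - y‖ := by linarith
      _ = (1 + m^2) * ‖x - y‖ := by ring
  have hn1 : ‖mulVecE D₁ ((x - pg x) - (y - pg y))‖ ≤ m * ((1 + m^2) * ‖x - y‖) := by
    calc ‖mulVecE D₁ ((x - pg x) - (y - pg y))‖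
        ≤ m * ‖(x - pg x) - (y - pg y)‖ :=
          norm_mulVecE_le hD₁.1 (le_of_lt hm0) h01 (fun i => (heig₁ i).2) _
      _ ≤ m * ((1 + m^2) * ‖x - y‖) := by
          exact mul_le_mul_of_nonneg_left hb1 (le_of_lt hm0)
  have hn2 : ‖mulVecE D₂ ((x - pf x) - (y - pf y))‖ ≤ m * ((1 + m^2) * ‖x - y‖) := by
    calc ‖mulVecE D₂ ((x - pf x) - (y - pf y))‖
        ≤ m * ‖(x - pf x) - (y - pf y)‖ :=
          norm_mulVecE_le hD₂.1 (le_of_lt hm0) h02 (fun i => (heig₂ i).2) _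
      _ ≤ m * ((1 + m^2) * ‖x - y‖) := by
          exact mul_le_mul_of_nonneg_left hb2 (le_of_lt hm0)
  calc ‖G x - G y‖
      ≤ ‖(1/lam) • mulVecE D₁ ((x - pg x) - (y - pg y))‖
        + ‖(1/mu) • mulVecE D₂ ((x - pf x) - (y - pf y))‖ := by
        rw [hGdiff]; exact norm_sub_le _ _
    _ = (1/lam) * ‖mulVecE D₁ ((x - pg x) - (y - pg y))‖
        + (1/mu) * ‖mulVecE D₂ ((x - pf x) - (y - pf y))‖ := by
        rw [norm_smul, norm_smul, Real.norm_eq_abs, Real.norm_eq_abs,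
          abs_of_pos (by positivity), abs_of_pos (by positivity)]
    _ ≤ (1/lam) * (m * ((1 + m^2) * ‖x - y‖)) + (1/mu) * (m * ((1 + m^2) * ‖x - y‖)) := by
        have hl : (0:ℝ) ≤ 1/lam := by positivity
        have hmu' : (0:ℝ) ≤ 1/mu := by positivity
        exact add_le_add (mul_le_mul_of_nonneg_left hn1 hl)
          (mul_le_mul_of_nonneg_left hn2 hmu')
    _ = (1/lam + 1/mu) * (m + m^3) * ‖x - y‖ := by ring
end

section
/- Under the setting above, for every x ∈ ℝⁿ: Φ(prox^{D₁}_{λg}(x)) + (1/(2mλ) − m/(2μ))‖prox^{D₁}_{λg}(x) − x‖² ≤ Φ_{λ,μ}(x) ≤ Φ(prox^{D₂}_{μf}(x)) + (m/(2λ) − 1/(2mμ))‖prox^{D₂}_{μf}(x) − x‖², where Φ = g − f. -/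
open Matrix

lemma quadD_eq_sum {n : ℕ} {A : Matrix (Fin n) (Fin n) ℝ} (hA : A.IsHermitian)
    (u : EuclideanSpace ℝ (Fin n)) :
    quadD A u = ∑ i, hA.eigenvalues i * (inner ℝ (hA.eigenvectorBasis i) u : ℝ)^2 := by
  set B := hA.eigenvectorBasis with hB
  have h1 : quadD A u = (inner ℝ u (Matrix.toEuclideanLin A u) : ℝ) := by
    rw [Matrix.toEuclideanLin_apply]
    simp [quadD, PiLp.inner_apply, RCLike.inner_apply, dotProduct, mul_comm]
  have hTB : ∀ j, Matrix.toEuclideanLin A (B j) = hA.eigenvalues j • B j := by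
    intro j
    apply (WithLp.equiv 2 (Fin n → ℝ)).injective
    rw [Matrix.toEuclideanLin_apply]
    simp [hA.mulVec_eigenvectorBasis j, hB]
  have hu : u = ∑ i, (inner ℝ (B i) u : ℝ) • B i := by
    conv_lhs => rw [← B.sum_repr u]
    simp [B.repr_apply_apply]
  have h2 : Matrix.toEuclideanLin A u
      = ∑ i, ((inner ℝ (B i) u : ℝ) * hA.eigenvalues i) • B i := by
    conv_lhs => rw [hu, map_sum]
    refine Finset.sum_congr rfl fun i _ => ?_
    rw [LinearMap.map_smul, hTB i, smul_smul]
  rw [h1, h2, inner_sum]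
  refine Finset.sum_congr rfl fun i _ => ?_
  rw [real_inner_smul_right, real_inner_comm u (B i)]
  ring

lemma norm_sq_eq_sum' {n : ℕ} {A : Matrix (Fin n) (Fin n) ℝ} (hA : A.IsHermitian)
    (u : EuclideanSpace ℝ (Fin n)) :
    ‖u‖^2 = ∑ i, (inner ℝ (hA.eigenvectorBasis i) u : ℝ)^2 := by
  have := hA.eigenvectorBasis.sum_inner_mul_inner u u
  rw [← real_inner_self_eq_norm_sq, ← this]
  refine Finset.sum_congr rfl fun i _ => ?_
  rw [real_inner_comm u (hA.eigenvectorBasis i)]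
  ring

lemma quadD_bounds {n : ℕ} {A : Matrix (Fin n) (Fin n) ℝ} (hA : A.IsHermitian)
    {a b : ℝ} (h : ∀ i, hA.eigenvalues i ∈ Set.Icc a b) (u : EuclideanSpace ℝ (Fin n)) :
    a * ‖u‖^2 ≤ quadD A u ∧ quadD A u ≤ b * ‖u‖^2 := by
  rw [quadD_eq_sum hA, norm_sq_eq_sum' hA u, Finset.mul_sum, Finset.mul_sum]
  constructor
  · exact Finset.sum_le_sum fun i _ =>
      mul_le_mul_of_nonneg_right (h i).1 (sq_nonneg _)
  · exact Finset.sum_le_sum fun i _ =>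
      mul_le_mul_of_nonneg_right (h i).2 (sq_nonneg _)

theorem stmt_11 {n : ℕ} (m lam mu : ℝ) (hm : 1 ≤ m) (hlam : 0 < lam) (hmu : 0 < mu)
    (D₁ D₂ : Matrix (Fin n) (Fin n) ℝ) (hD₁ : D₁.PosDef) (hD₂ : D₂.PosDef)
    (heig₁ : ∀ i, hD₁.1.eigenvalues i ∈ Set.Icc (1/m) m)
    (heig₂ : ∀ i, hD₂.1.eigenvalues i ∈ Set.Icc (1/m) m)
    (g f : EuclideanSpace ℝ (Fin n) → ℝ)
    (hg : ConvexOn ℝ Set.univ g) (hf : ConvexOn ℝ Set.univ f)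
    (hglsc : LowerSemicontinuous g) (hflsc : LowerSemicontinuous f)
    (pg pf : EuclideanSpace ℝ (Fin n) → EuclideanSpace ℝ (Fin n))
    (hpg : ∀ x w, g (pg x) + quadD D₁ (pg x - x) / (2*lam)
            ≤ g w + quadD D₁ (w - x) / (2*lam))
    (hpf : ∀ x w, f (pf x) + quadD D₂ (pf x - x) / (2*mu)
            ≤ f w + quadD D₂ (w - x) / (2*mu))
    (x : EuclideanSpace ℝ (Fin n)) :
    (g (pg x) - f (pg x)) + (1/(2*m*lam) - m/(2*mu)) * ‖pg x - x‖^2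
      ≤ (g (pg x) + quadD D₁ (pg x - x) / (2*lam))
          - (f (pf x) + quadD D₂ (pf x - x) / (2*mu)) ∧
    (g (pg x) + quadD D₁ (pg x - x) / (2*lam))
          - (f (pf x) + quadD D₂ (pf x - x) / (2*mu))
      ≤ (g (pf x) - f (pf x)) + (m/(2*lam) - 1/(2*m*mu)) * ‖pf x - x‖^2 := by
  have hm0 : (0:ℝ) < m := lt_of_lt_of_le one_pos hm
  set u := pg x - x with hu
  set v := pf x - x with hv
  obtain ⟨hq1l, hq1u⟩ := quadD_bounds hD₁.1 heig₁ u
  obtain ⟨hq1l', hq1u'⟩ := quadD_bounds hD₁.1 heig₁ v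
  obtain ⟨hq2l, hq2u⟩ := quadD_bounds hD₂.1 heig₂ u
  obtain ⟨hq2l', hq2u'⟩ := quadD_bounds hD₂.1 heig₂ v
  have h1 := hpf x (pg x)
  have h2 := hpg x (pf x)
  rw [← hu, ← hv] at h1 h2
  have hlam2 : (0:ℝ) < 2*lam := by linarith
  have hmu2 : (0:ℝ) < 2*mu := by linarith
  have d1 : (1/m * ‖u‖^2)/(2*lam) ≤ quadD D₁ u / (2*lam) :=
    (div_le_div_iff_of_pos_right hlam2).mpr hq1l
  have d2 : quadD D₂ u / (2*mu) ≤ (m * ‖u‖^2)/(2*mu) :=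
    (div_le_div_iff_of_pos_right hmu2).mpr hq2u
  have d3 : quadD D₁ v / (2*lam) ≤ (m * ‖v‖^2)/(2*lam) :=
    (div_le_div_iff_of_pos_right hlam2).mpr hq1u'
  have d4 : (1/m * ‖v‖^2)/(2*mu) ≤ quadD D₂ v / (2*mu) :=
    (div_le_div_iff_of_pos_right hmu2).mpr hq2l'
  have e1 : (1/(2*m*lam) - m/(2*mu)) * ‖u‖^2
      = (1/m * ‖u‖^2)/(2*lam) - (m * ‖u‖^2)/(2*mu) := by
    field_simp
  have e2 : (m/(2*lam) - 1/(2*m*mu)) * ‖v‖^2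
      = (m * ‖v‖^2)/(2*lam) - (1/m * ‖v‖^2)/(2*mu) := by
    field_simp
  constructor
  · linarith
  · linarith
end

section
/- Let F : ℝⁿ → ℝ be differentiable with η-Lipschitz gradient, bounded below, 0 < γ < 2, and x_{n+1} = x_n − (γ/η)∇F(x_n). Then min_{0 ≤ n ≤ N−1} ‖∇F(x_n)‖² ≤ (2η/(γ(2 − γ)N))(F(x₀) − inf F); i.e., the smallest gradient norm among the first N iterates is O(1/√N). -/
open InnerProductSpace

/-- Descent lemma: smoothness upper bound. -/
lemma descent_lemma {d : ℕ} (η : ℝ) (hη : 0 < η)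
    (F : EuclideanSpace ℝ (Fin d) → ℝ)
    (F' : EuclideanSpace ℝ (Fin d) → EuclideanSpace ℝ (Fin d))
    (hdiff : ∀ x, HasGradientAt F (F' x) x)
    (hlip : ∀ x y, ‖F' x - F' y‖ ≤ η * ‖x - y‖)
    (x v : EuclideanSpace ℝ (Fin d)) :
    F (x + v) ≤ F x + inner ℝ (F' x) v + η / 2 * ‖v‖ ^ 2 := by
  set φ : ℝ → ℝ := fun t => F (x + t • v) - t * inner ℝ (F' x) v - η * t ^ 2 / 2 * ‖v‖ ^ 2 with hφ
  have hder : ∀ t : ℝ, HasDerivAt φ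
      ((inner ℝ (F' (x + t • v)) v : ℝ) - inner ℝ (F' x) v - η * t * ‖v‖ ^ 2) t := by
    intro t
    have hc : HasDerivAt (fun t : ℝ => x + t • v) v t :=
      by simpa using ((hasDerivAt_id t).smul_const v).const_add x
    have h1 : HasDerivAt (fun t : ℝ => F (x + t • v))
        ((inner ℝ (F' (x + t • v)) v : ℝ)) t := by
      have := (hdiff (x + t • v)).hasFDerivAt.comp_hasDerivAt t hc
      exact this
    have h2 : HasDerivAt (fun t : ℝ => t * (inner ℝ (F' x) v : ℝ))
        ((inner ℝ (F' x) v : ℝ)) t := by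
      simpa using (hasDerivAt_id t).mul_const (inner ℝ (F' x) v : ℝ)
    have h3 : HasDerivAt (fun t : ℝ => η * t ^ 2 / 2 * ‖v‖ ^ 2)
        (η * t * ‖v‖ ^ 2) t := by
      have := ((hasDerivAt_pow 2 t).const_mul η).div_const 2
      have := this.mul_const (‖v‖ ^ 2)
      refine this.congr_deriv ?_
      ring
    exact (h1.sub h2).sub h3
  have hmono : φ 1 ≤ φ 0 := by
    have : AntitoneOn φ (Set.Icc 0 1) := by
      apply antitoneOn_of_deriv_nonpos (convex_Icc 0 1)
      · exact fun t _ => ((hder t).continuousAt).continuousWithinAt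
      · intro t ht
        exact (hder t).differentiableAt.differentiableWithinAt
      · intro t ht
        rw [interior_Icc] at ht
        rw [(hder t).deriv]
        have h1 : (inner ℝ (F' (x + t • v)) v : ℝ) - inner ℝ (F' x) v
            = inner ℝ (F' (x + t • v) - F' x) v := by
          rw [inner_sub_left]
        rw [h1]
        have h2 : (inner ℝ (F' (x + t • v) - F' x) v : ℝ) ≤ ‖F' (x + t • v) - F' x‖ * ‖v‖ :=
          real_inner_le_norm _ _
        have h3 : ‖F' (x + t • v) - F' x‖ ≤ η * (t * ‖v‖) := by
          have := hlip (x + t • v) x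
          simpa [norm_smul, abs_of_nonneg ht.1.le, mul_assoc] using this
        nlinarith [norm_nonneg v, ht.1, ht.2, norm_nonneg (F' (x + t • v) - F' x)]
    exact this (by norm_num) (by norm_num) (by norm_num)
  simp only [hφ, one_smul, zero_smul, add_zero, one_pow, one_mul, zero_mul] at hmono
  nlinarith [hmono]

theorem stmt_14 {d : ℕ} (η γ : ℝ) (hη : 0 < η) (hγ0 : 0 < γ) (hγ2 : γ < 2)
    (F : EuclideanSpace ℝ (Fin d) → ℝ)
    (F' : EuclideanSpace ℝ (Fin d) → EuclideanSpace ℝ (Fin d))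
    (hdiff : ∀ x, HasGradientAt F (F' x) x)
    (hlip : ∀ x y, ‖F' x - F' y‖ ≤ η * ‖x - y‖)
    (hbdd : BddBelow (Set.range F))
    (x : ℕ → EuclideanSpace ℝ (Fin d))
    (hx : ∀ n, x (n+1) = x n - (γ/η) • F' (x n)) :
    ∀ N : ℕ, 0 < N → ∃ n < N,
      ‖F' (x n)‖^2 ≤ (2*η/(γ*(2-γ)*N)) * (F (x 0) - ⨅ y, F y) := by
  intro N hN
  set c : ℝ := γ * (2 - γ) / (2 * η) with hc
  have hcpos : 0 < c := by
    apply div_pos (by nlinarith) (by linarith)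
  -- one-step descent
  have hstep : ∀ n, c * ‖F' (x n)‖ ^ 2 ≤ F (x n) - F (x (n + 1)) := by
    intro n
    have := descent_lemma η hη F F' hdiff hlip (x n) (-((γ/η) • F' (x n)))
    have hxe : x (n+1) = x n + -((γ/η) • F' (x n)) := by
      rw [hx n]; abel
    rw [← hxe] at this
    have hi : (inner ℝ (F' (x n)) (-((γ/η) • F' (x n))) : ℝ) = -(γ/η) * ‖F' (x n)‖ ^ 2 := by
      rw [inner_neg_right, real_inner_smul_right, real_inner_self_eq_norm_sq]
      ring
    have hn : ‖-((γ/η) • F' (x n))‖ ^ 2 = (γ/η) ^ 2 * ‖F' (x n)‖ ^ 2 := by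
      rw [norm_neg, norm_smul, mul_pow]
      congr 1
      rw [Real.norm_eq_abs, sq_abs]
    rw [hi, hn] at this
    have hne : η ≠ 0 := ne_of_gt hη
    rw [hc]
    have key : -(γ / η) * ‖F' (x n)‖ ^ 2 + η / 2 * ((γ / η) ^ 2 * ‖F' (x n)‖ ^ 2)
        = -(γ * (2 - γ) / (2 * η) * ‖F' (x n)‖ ^ 2) := by
      field_simp; ring
    linarith [this, key]
  -- infimum lower bound
  have hinf : ∀ z, (⨅ y, F y) ≤ F z := fun z => ciInf_le hbdd z
  -- telescoping sum
  have hsum : ∀ M : ℕ, ∑ n ∈ Finset.range M, c * ‖F' (x n)‖ ^ 2 ≤ F (x 0) - F (x M) := by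
    intro M
    induction M with
    | zero => simp
    | succ M ih =>
      rw [Finset.sum_range_succ]
      have := hstep M
      linarith
  have hsum' : ∑ n ∈ Finset.range N, c * ‖F' (x n)‖ ^ 2 ≤ F (x 0) - ⨅ y, F y := by
    have := hsum N
    have := hinf (x N)
    linarith
  by_contra h
  push_neg at h
  set B : ℝ := (2*η/(γ*(2-γ)*N)) * (F (x 0) - ⨅ y, F y) with hB
  have hlt : ∑ n ∈ Finset.range N, c * B < ∑ n ∈ Finset.range N, c * ‖F' (x n)‖ ^ 2 := by
    apply Finset.sum_lt_sum_of_nonempty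
    · exact Finset.nonempty_range_iff.mpr hN.ne'
    · intro n hn
      have := h n (Finset.mem_range.mp hn)
      exact mul_lt_mul_of_pos_left this hcpos
  have hNcB : ∑ n ∈ Finset.range N, c * B = F (x 0) - ⨅ y, F y := by
    have hNne : (N : ℝ) ≠ 0 := Nat.cast_ne_zero.mpr hN.ne'
    have hg1 : γ ≠ 0 := ne_of_gt hγ0
    have hg2 : (2 - γ) ≠ 0 := by linarith
    have hne : η ≠ 0 := ne_of_gt hη
    have hcB : c * B = (F (x 0) - ⨅ y, F y) / N := by
      rw [hB, hc]; field_simp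
    rw [Finset.sum_const, Finset.card_range, nsmul_eq_mul, hcB]
    field_simp
  linarith
end

section
/- Let F : ℝⁿ → ℝ be differentiable with η-Lipschitz gradient satisfying additionally ⟨∇F(x) − ∇F(y), x − y⟩ ≥ −η₁‖x − y‖² for all x, y. Consider the inertial iteration w_n = x_n + θ_n(x_n − x_{n−1}), x_{n+1} = x_n − (γ/η)∇F(w_n) with 0 < γ < 1 and θ_n ≥ 0. Then F(x_{n+1}) ≤ F(x_n) + (ηθ_n/2 − η/γ + η/2)‖x_{n+1} − x_n‖² + (η₁θ_n² + ηθ_n² + ηθ_n/2)‖x_n − x_{n−1}‖². -/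
open RealInnerProductSpace

lemma descent_aux {d : ℕ} (η : ℝ) (hη : 0 < η)
    (F : EuclideanSpace ℝ (Fin d) → ℝ)
    (F' : EuclideanSpace ℝ (Fin d) → EuclideanSpace ℝ (Fin d))
    (hdiff : ∀ x, HasGradientAt F (F' x) x)
    (hlip : ∀ x y, ‖F' x - F' y‖ ≤ η * ‖x - y‖)
    (x y : EuclideanSpace ℝ (Fin d)) :
    F y ≤ F x + ⟪F' x, y - x⟫ + η / 2 * ‖y - x‖ ^ 2 := by
  set v := y - x with hv
  set c : ℝ := ⟪F' x, v⟫ with hc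
  set h : ℝ → ℝ := fun t => F (x + t • v) - t * c - η / 2 * ‖v‖ ^ 2 * t ^ 2 with hh
  have hderiv : ∀ t : ℝ, HasDerivAt h
      (⟪F' (x + t • v), v⟫ - c - η * ‖v‖ ^ 2 * t) t := by
    intro t
    have hline : HasDerivAt (fun t : ℝ => x + t • v) v t := by
      simpa using ((hasDerivAt_id t).smul_const v).const_add x
    have hF : HasDerivAt (fun t : ℝ => F (x + t • v)) ⟪F' (x + t • v), v⟫ t := by
      have := ((hdiff (x + t • v)).hasFDerivAt).comp_hasDerivAt t hline
      simp at this
      exact this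
    have h1 : HasDerivAt (fun t : ℝ => t * c) c t := by
      simpa using (hasDerivAt_id t).mul_const c
    have h2 : HasDerivAt (fun t : ℝ => η / 2 * ‖v‖ ^ 2 * t ^ 2)
        (η * ‖v‖ ^ 2 * t) t := by
      have := (hasDerivAt_pow 2 t).const_mul (η / 2 * ‖v‖ ^ 2)
      exact this.congr_deriv (by ring)
    exact (hF.sub h1).sub h2
  have hanti : AntitoneOn h (Set.Icc (0:ℝ) 1) := by
    apply antitoneOn_of_deriv_nonpos (convex_Icc 0 1)
    · exact fun t _ => (hderiv t).differentiableAt.continuousAt.continuousWithinAt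
    · exact fun t _ => ((hderiv t).differentiableAt).differentiableWithinAt
    · intro t ht
      rw [(hderiv t).deriv]
      rw [interior_Icc] at ht
      have hb : ⟪F' (x + t • v) - F' x, v⟫ ≤ η * t * ‖v‖ ^ 2 := by
        calc ⟪F' (x + t • v) - F' x, v⟫ ≤ ‖F' (x + t • v) - F' x‖ * ‖v‖ :=
              real_inner_le_norm _ _
          _ ≤ (η * ‖(x + t • v) - x‖) * ‖v‖ := by
              apply mul_le_mul_of_nonneg_right (hlip _ _) (norm_nonneg _)
          _ = η * t * ‖v‖ ^ 2 := by
              rw [add_sub_cancel_left, norm_smul, Real.norm_eq_abs,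
                abs_of_nonneg ht.1.le]
              ring
      have := hb
      rw [inner_sub_left] at this
      linarith
  have h10 : h 1 ≤ h 0 := hanti (by norm_num) (by norm_num) (by norm_num)
  have e1 : x + (1:ℝ) • v = y := by rw [one_smul, hv]; abel
  have e0 : x + (0:ℝ) • v = x := by rw [zero_smul, add_zero]
  simp only [hh, e1, e0] at h10
  have : F y - 1 * c - η / 2 * ‖v‖ ^ 2 * 1 ^ 2 ≤ F x - 0 * c - η / 2 * ‖v‖ ^ 2 * 0 ^ 2 := h10
  simp only [hc, hv] at this ⊢
  linarith

theorem stmt_15 {d : ℕ} (η η₁ γ : ℝ) (hη : 0 < η) (hη₁ : 0 ≤ η₁)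
    (hγ0 : 0 < γ) (hγ1 : γ < 1)
    (F : EuclideanSpace ℝ (Fin d) → ℝ)
    (F' : EuclideanSpace ℝ (Fin d) → EuclideanSpace ℝ (Fin d))
    (hdiff : ∀ x, HasGradientAt F (F' x) x)
    (hlip : ∀ x y, ‖F' x - F' y‖ ≤ η * ‖x - y‖)
    (hmono : ∀ x y, ⟪F' x - F' y, x - y⟫ ≥ -η₁ * ‖x - y‖^2)
    (θ : ℕ → ℝ) (hθ : ∀ n, 0 ≤ θ n ∧ θ n ≤ 1)
    (x w : ℕ → EuclideanSpace ℝ (Fin d))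
    (hw : ∀ n, 1 ≤ n → w n = x n + θ n • (x n - x (n-1)))
    (hx : ∀ n, 1 ≤ n → x (n+1) = x n - (γ/η) • F' (w n)) :
    ∀ n, 1 ≤ n →
      F (x (n+1)) ≤ F (x n)
        + (η * θ n / 2 - η/γ + η/2) * ‖x (n+1) - x n‖^2
        + (η₁ * (θ n)^2 + η * (θ n)^2 + η * θ n / 2) * ‖x n - x (n-1)‖^2 := by
  intro n hn
  set s := x (n+1) - x n with hs
  set t := x n - x (n-1) with ht
  have hθ0 := (hθ n).1
  -- F' (w n) = -(η/γ) • s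
  have hsg : s = -((γ/η) • F' (w n)) := by
    rw [hs, hx n hn]; module
  have hFw : F' (w n) = (-(η/γ)) • s := by
    rw [hsg, smul_neg, smul_smul]
    have hc : -(η/γ) * (γ/η) = -1 := by field_simp
    rw [hc, neg_smul, one_smul, neg_neg]
  -- inner products
  have hinner1 : ⟪F' (w n), s⟫ = -(η/γ) * ‖s‖ ^ 2 := by
    rw [hFw, real_inner_smul_left, real_inner_self_eq_norm_sq]
  have hwx : x n - w n = -(θ n • t) := by
    rw [hw n hn]; module
  have hnorm : ‖x n - w n‖ = θ n * ‖t‖ := by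
    rw [hwx, norm_neg, norm_smul, Real.norm_eq_abs, abs_of_nonneg hθ0]
  have hinner2 : ⟪F' (x n) - F' (w n), s⟫ ≤ η * θ n * ‖t‖ * ‖s‖ := by
    calc ⟪F' (x n) - F' (w n), s⟫ ≤ ‖F' (x n) - F' (w n)‖ * ‖s‖ :=
          real_inner_le_norm _ _
      _ ≤ (η * ‖x n - w n‖) * ‖s‖ :=
          mul_le_mul_of_nonneg_right (hlip _ _) (norm_nonneg _)
      _ = η * θ n * ‖t‖ * ‖s‖ := by rw [hnorm]; ring
  have hdesc := descent_aux η hη F F' hdiff hlip (x n) (x (n+1))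
  rw [← hs] at hdesc
  have hsplit : ⟪F' (x n), s⟫ = ⟪F' (x n) - F' (w n), s⟫ + ⟪F' (w n), s⟫ := by
    rw [inner_sub_left]; ring
  have hkey : ⟪F' (x n), s⟫ ≤ η * θ n * ‖t‖ * ‖s‖ + -(η/γ) * ‖s‖ ^ 2 := by
    rw [hsplit, hinner1]; linarith
  have hts : η * θ n * ‖t‖ * ‖s‖ ≤ η * θ n / 2 * (‖t‖ ^ 2 + ‖s‖ ^ 2) := by
    nlinarith [sq_nonneg (‖t‖ - ‖s‖), mul_nonneg hη.le hθ0]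
  have h1 : (0:ℝ) ≤ η₁ * (θ n) ^ 2 * ‖t‖ ^ 2 :=
    mul_nonneg (mul_nonneg hη₁ (sq_nonneg _)) (sq_nonneg _)
  have h2 : (0:ℝ) ≤ η * (θ n) ^ 2 * ‖t‖ ^ 2 :=
    mul_nonneg (mul_nonneg hη.le (sq_nonneg _)) (sq_nonneg _)
  nlinarith [hdesc, hkey, hts]
end
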